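/- Let h₁ ≤ h₂ be real numbers with h₁ ≤ E(M) ≤ h₂. Then h₁ ≤ L² Σ_{j=1}^{N} (j·w_j − (j−1)·v_j) and L² Σ_{j=1}^{N} ((j−1)·w_j − j·v_j) ≤ h₂. -/

import Mathlib

open Real MeasureTheory Set

theorem mean_interval_bounds (f g M : ℝ → ℝ)
    (hf_meas : Measurable f)
    (hf01 : ∀ x ∈ Icc (-1:ℝ) 1, 0 ≤ f x ∧ f x ≤ 1)
    (hf_supp : ∀ x, x ∉ Icc (-1:ℝ) 1 → f x = 0)
    (hf_int : ∫ x in (-1:ℝ)..1, f x = 1)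
    (hg : ∀ x, g x = if x ∈ Icc (-1:ℝ) 1 then 1 - f x else 0)
    (hM : ∀ x, M x = ∫ t in (-1:ℝ)..1, f t * g (x + t))
    (EM : ℝ) (hEM : EM = ∫ x in (-2:ℝ)..2, x * M x)
    (N : ℕ) (hN : 0 < N) (L : ℝ) (hL : L = 2 / (N : ℝ))
    (w v : ℕ → ℝ)
    (hw : ∀ j : ℕ, 1 ≤ j → j ≤ N →
      w j = (1/L) * ∫ x in (((j:ℝ) - 1) * L)..((j:ℝ) * L), M x)
    (hv : ∀ j : ℕ, 1 ≤ j → j ≤ N →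
      v j = (1/L) * ∫ x in (-(j:ℝ) * L)..(-((j:ℝ) - 1) * L), M x)
    (h₁ h₂ : ℝ) (hh : h₁ ≤ h₂) (hEM1 : h₁ ≤ EM) (hEM2 : EM ≤ h₂) :
    h₁ ≤ L^2 * ∑ j ∈ Finset.Icc 1 N, ((j:ℝ) * w j - ((j:ℝ) - 1) * v j) ∧
    L^2 * ∑ j ∈ Finset.Icc 1 N, (((j:ℝ) - 1) * w j - (j:ℝ) * v j) ≤ h₂ := by
  -- basic facts about f and g
  have hf01' : ∀ x : ℝ, 0 ≤ f x ∧ f x ≤ 1 := by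
    intro x
    by_cases hx : x ∈ Icc (-1:ℝ) 1
    · exact hf01 x hx
    · rw [hf_supp x hx]; norm_num
  have hg01 : ∀ x : ℝ, 0 ≤ g x ∧ g x ≤ 1 := by
    intro x
    rw [hg x]
    split_ifs with hx
    · constructor
      · linarith [(hf01 x hx).2]
      · linarith [(hf01 x hx).1]
    · norm_num
  have hg_meas : Measurable g := by
    have : g = fun x => if x ∈ Icc (-1:ℝ) 1 then 1 - f x else 0 := funext hg
    rw [this]
    exact Measurable.ite measurableSet_Icc (measurable_const.sub hf_meas) measurable_const
  -- M is nonnegative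
  have hM0 : ∀ x : ℝ, 0 ≤ M x := by
    intro x
    rw [hM x]
    apply intervalIntegral.integral_nonneg (by norm_num : (-1:ℝ) ≤ 1)
    intro t _
    exact mul_nonneg (hf01' t).1 (hg01 (x + t)).1
  -- M is bounded by 2
  have hFint : ∀ x : ℝ, IntervalIntegrable (fun t => f t * g (x + t)) volume (-1) 1 := by
    intro x
    rw [intervalIntegrable_iff]
    refine Integrable.mono' (g := fun _ => (1:ℝ)) ?_ ?_ ?_
    · exact integrableOn_const measure_Ioc_lt_top.ne
    · exact ((hf_meas.mul (hg_meas.comp ((measurable_const.add measurable_id)))).aestronglyMeasurable)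
    · refine Filter.Eventually.of_forall fun t => ?_
      rw [Real.norm_eq_abs, abs_of_nonneg (mul_nonneg (hf01' t).1 (hg01 (x + t)).1)]
      exact mul_le_one₀ (hf01' t).2 (hg01 (x + t)).1 (hg01 (x + t)).2
  have hM2 : ∀ x : ℝ, M x ≤ 2 := by
    intro x
    rw [hM x]
    calc (∫ t in (-1:ℝ)..1, f t * g (x + t)) ≤ ∫ _ in (-1:ℝ)..1, (1:ℝ) := by
          apply intervalIntegral.integral_mono_on (by norm_num : (-1:ℝ) ≤ 1) (hFint x)
            intervalIntegrable_const
          intro t _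
          exact mul_le_one₀ (hf01' t).2 (hg01 (x + t)).1 (hg01 (x + t)).2
      _ = 2 := by simp; norm_num
  -- M is measurable
  have hM_meas : Measurable M := by
    have h1 : StronglyMeasurable fun p : ℝ × ℝ => f p.2 * g (p.1 + p.2) :=
      ((hf_meas.comp measurable_snd).mul
        (hg_meas.comp (measurable_fst.add measurable_snd))).stronglyMeasurable
    have h2 : StronglyMeasurable fun x : ℝ =>
        ∫ t in Ioc (-1:ℝ) 1, f t * g (x + t) ∂volume :=
      h1.integral_prod_right' (ν := volume.restrict (Ioc (-1:ℝ) 1))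
    have : M = fun x => ∫ t in Ioc (-1:ℝ) 1, f t * g (x + t) ∂volume := by
      funext x
      rw [hM x, intervalIntegral.integral_of_le (by norm_num : (-1:ℝ) ≤ 1)]
    rw [this]
    exact h2.measurable
  -- integrability of M and of x * M x on all intervals
  have hMint : ∀ a b : ℝ, IntervalIntegrable M volume a b := by
    intro a b
    rw [intervalIntegrable_iff]
    refine Integrable.mono' (g := fun _ => (2:ℝ)) ?_ hM_meas.aestronglyMeasurable ?_
    · exact integrableOn_const measure_Ioc_lt_top.ne
    · refine Filter.Eventually.of_forall fun x => ?_
      rw [Real.norm_eq_abs, abs_of_nonneg (hM0 x)]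
      exact hM2 x
  have hxMint : ∀ a b : ℝ, IntervalIntegrable (fun x => x * M x) volume a b := by
    intro a b
    rw [intervalIntegrable_iff]
    refine Integrable.mono' (g := fun _ => (|a| + |b|) * 2) ?_
      (measurable_id.mul hM_meas).aestronglyMeasurable ?_
    · exact integrableOn_const measure_Ioc_lt_top.ne
    · filter_upwards [ae_restrict_mem measurableSet_uIoc] with x hx
      rw [Real.norm_eq_abs, abs_mul]
      have hx1 : |x| ≤ |a| + |b| := by
        rcases hx with ⟨hxl, hxr⟩
        rw [abs_le]
        constructor
        · have h1 : -(|a| + |b|) ≤ min a b :=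
            le_min (by linarith [neg_abs_le a, abs_nonneg b])
              (by linarith [neg_abs_le b, abs_nonneg a])
          linarith
        · have h2 : max a b ≤ |a| + |b| :=
            max_le (by linarith [le_abs_self a, abs_nonneg b])
              (by linarith [le_abs_self b, abs_nonneg a])
          linarith
      have hx2 : |M x| ≤ 2 := by rw [abs_of_nonneg (hM0 x)]; exact hM2 x
      exact mul_le_mul hx1 hx2 (abs_nonneg _) (by positivity)
  -- key pointwise-interval estimate
  have key : ∀ c d : ℝ, c ≤ d →
      c * (∫ x in c..d, M x) ≤ (∫ x in c..d, x * M x) ∧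
      (∫ x in c..d, x * M x) ≤ d * (∫ x in c..d, M x) := by
    intro c d hcd
    constructor
    · rw [← intervalIntegral.integral_const_mul]
      apply intervalIntegral.integral_mono_on hcd ((hMint c d).const_mul c) (hxMint c d)
      intro x hx
      exact mul_le_mul_of_nonneg_right hx.1 (hM0 x)
    · rw [← intervalIntegral.integral_const_mul]
      apply intervalIntegral.integral_mono_on hcd (hxMint c d) ((hMint c d).const_mul d)
      intro x hx
      exact mul_le_mul_of_nonneg_right hx.2 (hM0 x)
  have hL0 : 0 < L := by
    rw [hL]
    positivity
  have hNL : (N : ℝ) * L = 2 := by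
    rw [hL]
    field_simp
  -- abbreviations
  set A : ℕ → ℝ := fun j => ∫ x in (((j:ℝ) - 1) * L)..((j:ℝ) * L), x * M x with hA
  set B : ℕ → ℝ := fun j => ∫ x in (-(j:ℝ) * L)..(-((j:ℝ) - 1) * L), x * M x with hB
  set P : ℕ → ℝ := fun j => ∫ x in (((j:ℝ) - 1) * L)..((j:ℝ) * L), M x with hP
  set Q : ℕ → ℝ := fun j => ∫ x in (-(j:ℝ) * L)..(-((j:ℝ) - 1) * L), M x with hQ
  -- telescoping sums
  have sumA : ∀ n : ℕ, ∑ j ∈ Finset.Icc 1 n, A j = ∫ x in (0:ℝ)..((n:ℝ) * L), x * M x := by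
    intro n
    induction n with
    | zero => simp
    | succ n ih =>
      rw [Finset.sum_Icc_succ_top (Nat.le_add_left 1 n), ih]
      have h1 : ((n + 1 : ℕ) : ℝ) - 1 = (n : ℝ) := by push_cast; ring
      have h2 : (∫ x in ((n:ℝ) * L)..(((n+1:ℕ):ℝ) * L), x * M x) = A (n + 1) := by
        rw [hA]
        simp only [h1]
      rw [← h2, intervalIntegral.integral_add_adjacent_intervals (hxMint 0 ((n:ℝ) * L))
        (hxMint ((n:ℝ) * L) (((n+1:ℕ):ℝ) * L))]
  have sumB : ∀ n : ℕ, ∑ j ∈ Finset.Icc 1 n, B j = ∫ x in (-(n:ℝ) * L)..(0:ℝ), x * M x := by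
    intro n
    induction n with
    | zero => simp
    | succ n ih =>
      rw [Finset.sum_Icc_succ_top (Nat.le_add_left 1 n), ih]
      have h1 : -(((n + 1 : ℕ) : ℝ)) + 1 = -(n : ℝ) := by push_cast; ring
      have h2 : (∫ x in (-((n+1:ℕ):ℝ) * L)..(-(n:ℝ) * L), x * M x) = B (n + 1) := by
        rw [hB]
        have : -((((n+1:ℕ):ℝ)) - 1) = -(n : ℝ) := by push_cast; ring
        simp only [this]
      rw [add_comm, ← h2, intervalIntegral.integral_add_adjacent_intervals
        (hxMint (-((n+1:ℕ):ℝ) * L) (-(n:ℝ) * L)) (hxMint (-(n:ℝ) * L) 0)]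
  -- EM equals the sum of the A's and B's
  have hEMsum : EM = ∑ j ∈ Finset.Icc 1 N, (A j + B j) := by
    rw [Finset.sum_add_distrib, sumA N, sumB N, hEM]
    have h2 : -(N:ℝ) * L = -2 := by rw [neg_mul, hNL]
    rw [h2, hNL, add_comm,
      intervalIntegral.integral_add_adjacent_intervals (hxMint (-2) 0) (hxMint 0 2)]
  -- per-term bounds
  have hAB_bound : ∀ j ∈ Finset.Icc 1 N,
      ((j:ℝ) - 1) * L * P j - (j:ℝ) * L * Q j ≤ A j + B j ∧
      A j + B j ≤ (j:ℝ) * L * P j - ((j:ℝ) - 1) * L * Q j := by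
    intro j hj
    simp only [Finset.mem_Icc] at hj
    have hj1 : (1:ℝ) ≤ (j:ℝ) := by exact_mod_cast hj.1
    have hcd : ((j:ℝ) - 1) * L ≤ (j:ℝ) * L := by nlinarith
    have hcd' : -(j:ℝ) * L ≤ -((j:ℝ) - 1) * L := by nlinarith
    have k1 := key (((j:ℝ) - 1) * L) ((j:ℝ) * L) hcd
    have k2 := key (-(j:ℝ) * L) (-((j:ℝ) - 1) * L) hcd'
    constructor
    · have := k1.1
      have := k2.1
      simp only [hA, hB, hP, hQ]
      nlinarith [k1.1, k2.1]
    · simp only [hA, hB, hP, hQ]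
      nlinarith [k1.2, k2.2]
  constructor
  · calc h₁ ≤ EM := hEM1
      _ = ∑ j ∈ Finset.Icc 1 N, (A j + B j) := hEMsum
      _ ≤ ∑ j ∈ Finset.Icc 1 N, ((j:ℝ) * L * P j - ((j:ℝ) - 1) * L * Q j) :=
          Finset.sum_le_sum fun j hj => (hAB_bound j hj).2
      _ = L^2 * ∑ j ∈ Finset.Icc 1 N, ((j:ℝ) * w j - ((j:ℝ) - 1) * v j) := by
          rw [Finset.mul_sum]
          apply Finset.sum_congr rfl
          intro j hj
          simp only [Finset.mem_Icc] at hj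
          rw [hw j hj.1 hj.2, hv j hj.1 hj.2]
          have e1 : (∫ x in (((j:ℝ) - 1) * L)..((j:ℝ) * L), M x) = P j := rfl
          have e2 : (∫ x in (-(j:ℝ) * L)..(-((j:ℝ) - 1) * L), M x) = Q j := rfl
          rw [e1, e2]
          field_simp
  · calc L^2 * ∑ j ∈ Finset.Icc 1 N, (((j:ℝ) - 1) * w j - (j:ℝ) * v j)
        = ∑ j ∈ Finset.Icc 1 N, (((j:ℝ) - 1) * L * P j - (j:ℝ) * L * Q j) := by
          rw [Finset.mul_sum]
          apply Finset.sum_congr rfl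
          intro j hj
          simp only [Finset.mem_Icc] at hj
          rw [hw j hj.1 hj.2, hv j hj.1 hj.2]
          have e1 : (∫ x in (((j:ℝ) - 1) * L)..((j:ℝ) * L), M x) = P j := rfl
          have e2 : (∫ x in (-(j:ℝ) * L)..(-((j:ℝ) - 1) * L), M x) = Q j := rfl
          rw [e1, e2]
          field_simp
      _ ≤ ∑ j ∈ Finset.Icc 1 N, (A j + B j) :=
          Finset.sum_le_sum fun j hj => (hAB_bound j hj).1
      _ = EM := hEMsum.symm
      _ ≤ h₂ := hEM2
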